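/- For every integer a, the inclusions fil_b M ∩ fil^c M ⊆ fil^M_a M, over all pairs of integers (b,c) with b − c = a, induce a well-defined isomorphism of R-modules ⊕_{b−c=a} gr^c_b M ≅ gr^M_a M (the direct sum has only finitely many nonzero summands since N is nilpotent). -/

import Mathlib

open DirectSum

/-- `fil_a M = ker(N^{a+1})` for `a ≥ −1`, and `fil_a M = 0` for `a < −1`. -/
noncomputable def filKer {R M : Type*} [CommRing R] [AddCommGroup M] [Module R M]
    (N : M →ₗ[R] M) (a : ℤ) : Submodule R M :=
  LinearMap.ker (N ^ (a + 1).toNat)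

/-- `fil^a M = range(N^a)` for `a ≥ 0`, and `fil^a M = M` for `a < 0`. -/
noncomputable def filRange {R M : Type*} [CommRing R] [AddCommGroup M] [Module R M]
    (N : M →ₗ[R] M) (a : ℤ) : Submodule R M :=
  LinearMap.range (N ^ a.toNat)

/-- The monodromy filtration `fil^M_a M = Σ_{b−c=a} (fil_b M ∩ fil^c M)`. -/
noncomputable def filMonodromy {R M : Type*} [CommRing R] [AddCommGroup M] [Module R M]
    (N : M →ₗ[R] M) (a : ℤ) : Submodule R M :=
  ⨆ (b : ℤ) (c : ℤ) (_ : b - c = a), filKer N b ⊓ filRange N c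

/-- The graded piece `gr^M_a M = fil^M_a M / fil^M_{a−1} M`. -/
noncomputable abbrev grM {R M : Type*} [CommRing R] [AddCommGroup M] [Module R M]
    (N : M →ₗ[R] M) (a : ℤ) :=
  (filMonodromy N a) ⧸ (filMonodromy N (a - 1)).comap (filMonodromy N a).subtype

/-- The graded piece
`gr^c_b M = (fil_b M ∩ fil^c M) / ((fil_{b−1} M + fil^{c+1} M) ∩ fil_b M ∩ fil^c M)`. -/
noncomputable abbrev grBC {R M : Type*} [CommRing R] [AddCommGroup M] [Module R M]
    (N : M →ₗ[R] M) (c b : ℤ) :=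
  ↥(filKer N b ⊓ filRange N c) ⧸
    (filKer N (b - 1) ⊔ filRange N (c + 1)).comap (filKer N b ⊓ filRange N c).subtype

section Aux

variable {R M : Type*} [CommRing R] [AddCommGroup M] [Module R M] (N : M →ₗ[R] M)

lemma filKer_mono {b b' : ℤ} (h : b ≤ b') : filKer N b ≤ filKer N b' := by
  intro x hx
  simp only [filKer, LinearMap.mem_ker] at *
  have hk : (b' + 1).toNat = ((b' + 1).toNat - (b + 1).toNat) + (b + 1).toNat := by omega
  rw [hk, pow_add, Module.End.mul_apply, hx, map_zero]

lemma filRange_anti {c c' : ℤ} (h : c ≤ c') : filRange N c' ≤ filRange N c := by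
  rintro x ⟨y, rfl⟩
  have hc : c'.toNat = c.toNat + (c'.toNat - c.toNat) := by omega
  exact ⟨(N ^ (c'.toNat - c.toNat)) y, by rw [← Module.End.mul_apply, ← pow_add, ← hc]⟩

lemma term_le_filMonodromy {b c a : ℤ} (h : b - c = a) :
    filKer N b ⊓ filRange N c ≤ filMonodromy N a :=
  le_iSup_of_le b (le_iSup_of_le c (le_iSup_of_le h le_rfl))

lemma key_modular (b c : ℤ) :
    (filKer N (b - 1) ⊔ filRange N (c + 1)) ⊓ (filKer N b ⊓ filRange N c)
      ≤ (filKer N (b - 1) ⊓ filRange N c) ⊔ (filKer N b ⊓ filRange N (c + 1)) := by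
  have hA : filKer N (b - 1) ≤ filKer N b := filKer_mono N (by omega)
  have hB : filRange N (c + 1) ≤ filRange N c := filRange_anti N (by omega)
  calc (filKer N (b - 1) ⊔ filRange N (c + 1)) ⊓ (filKer N b ⊓ filRange N c)
      = ((filKer N (b - 1) ⊔ filRange N (c + 1)) ⊓ filKer N b) ⊓ filRange N c := by
        rw [inf_assoc]
    _ = (filKer N (b - 1) ⊔ (filRange N (c + 1) ⊓ filKer N b)) ⊓ filRange N c := by
        rw [sup_inf_assoc_of_le _ hA]
    _ = ((filRange N (c + 1) ⊓ filKer N b) ⊔ filKer N (b - 1)) ⊓ filRange N c := by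
        rw [sup_comm]
    _ = (filRange N (c + 1) ⊓ filKer N b) ⊔ (filKer N (b - 1) ⊓ filRange N c) :=
        sup_inf_assoc_of_le _ (le_trans inf_le_left hB)
    _ ≤ (filKer N (b - 1) ⊓ filRange N c) ⊔ (filKer N b ⊓ filRange N (c + 1)) := by
        rw [sup_comm, inf_comm (filRange N (c+1))]

end Aux

lemma filMonodromy_eq {R M : Type*} [CommRing R] [AddCommGroup M] [Module R M]
    (N : M →ₗ[R] M) (a : ℤ) :
    filMonodromy N a = ⨆ b : ℤ, filKer N b ⊓ filRange N (b - a) := by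
  apply le_antisymm
  · refine iSup_le fun b => iSup_le fun c => iSup_le fun h => ?_
    have : c = b - a := by omega
    subst this
    exact le_iSup (fun b => filKer N b ⊓ filRange N (b - a)) b
  · exact iSup_le fun b => term_le_filMonodromy N (by omega)

lemma filMonodromy_le_sup {R M : Type*} [CommRing R] [AddCommGroup M] [Module R M]
    (N : M →ₗ[R] M) (a K : ℤ) :
    filMonodromy N (a - 1) ≤ filKer N (K - 1) ⊔ filRange N (K - a + 1) := by
  refine iSup_le fun b => iSup_le fun c => iSup_le fun h => ?_
  rcases le_or_gt b (K - 1) with hb | hb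
  · exact le_sup_of_le_left (inf_le_left.trans (filKer_mono N hb))
  · exact le_sup_of_le_right (inf_le_right.trans (filRange_anti N (by omega)))

lemma sum_mem_key {R M : Type*} [CommRing R] [AddCommGroup M] [Module R M]
    (N : M →ₗ[R] M) (a : ℤ) (s : Finset ℤ) :
    ∀ x : ℤ → M, (∀ b, x b ∈ filKer N b ⊓ filRange N (b - a)) →
      (∑ b ∈ s, x b) ∈ filMonodromy N (a - 1) →
      ∀ b ∈ s, x b ∈ filMonodromy N (a - 1) := by
  induction s using Finset.induction_on_max with
  | empty => intro x _ _ b hb; simp at hb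
  | insert K s hKs ih =>
    intro x hx hsum b hb
    rw [Finset.sum_insert (fun hmem => absurd rfl (ne_of_lt (hKs K hmem)))] at hsum
    have hrest : (∑ b ∈ s, x b) ∈ filKer N (K - 1) :=
      Submodule.sum_mem _ fun b' hb' =>
        filKer_mono N (by have := hKs b' hb'; omega) (hx b').1
    have hxK : x K ∈ filMonodromy N (a - 1) := by
      have h1 : x K ∈ (filKer N (K - 1) ⊔ filRange N (K - a + 1)) ⊓
          (filKer N K ⊓ filRange N (K - a)) := by
        refine ⟨?_, hx K⟩
        have : x K = (x K + ∑ b ∈ s, x b) - (∑ b ∈ s, x b) := by abel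
        rw [this]
        exact Submodule.sub_mem _ (filMonodromy_le_sup N a K hsum)
          (Submodule.mem_sup_left hrest)
      have h2 := key_modular N K (K - a) h1
      refine sup_le (α := Submodule R M) ?_ ?_ h2
      · exact term_le_filMonodromy N (by omega)
      · exact term_le_filMonodromy N (by omega)
    rcases Finset.mem_insert.mp hb with rfl | hb'
    · exact hxK
    · have : (∑ b ∈ s, x b) ∈ filMonodromy N (a - 1) := by
        have : (∑ b ∈ s, x b) = (x K + ∑ b ∈ s, x b) - x K := by abel
        rw [this]; exact Submodule.sub_mem _ hsum hxK
      exact ih x hx this b hb'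

section Main
variable {R M : Type*} [CommRing R] [AddCommGroup M] [Module R M] (N : M →ₗ[R] M) (a : ℤ)

lemma inf_le_filMonodromy (b : ℤ) :
    filKer N b ⊓ filRange N (b - a) ≤ filMonodromy N a :=
  term_le_filMonodromy N (by omega)

/-- the map `fil_b ∩ fil^{b-a} → gr^M_a`. -/
noncomputable def pMap (b : ℤ) : ↥(filKer N b ⊓ filRange N (b - a)) →ₗ[R] grM N a :=
  (Submodule.mkQ _).comp (Submodule.inclusion (inf_le_filMonodromy N a b))

lemma inf_sup_le_filMonodromy (b : ℤ) :
    (filKer N (b - 1) ⊔ filRange N (b - a + 1)) ⊓ (filKer N b ⊓ filRange N (b - a))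
      ≤ filMonodromy N (a - 1) := by
  refine (key_modular N b (b - a)).trans (sup_le ?_ ?_)
  · exact term_le_filMonodromy N (by omega)
  · exact term_le_filMonodromy N (by omega)

lemma pMap_ker (b : ℤ) :
    (filKer N (b - 1) ⊔ filRange N (b - a + 1)).comap
        (filKer N b ⊓ filRange N (b - a)).subtype ≤ LinearMap.ker (pMap N a b) := by
  intro x hx
  simp only [LinearMap.mem_ker, pMap, LinearMap.comp_apply, Submodule.mkQ_apply,
    Submodule.Quotient.mk_eq_zero, Submodule.mem_comap]
  exact inf_sup_le_filMonodromy N a b ⟨hx, x.2⟩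

noncomputable def phiB (b : ℤ) : grBC N (b - a) b →ₗ[R] grM N a :=
  Submodule.liftQ _ (pMap N a b) (pMap_ker N a b)

noncomputable def phi : (⨁ b : ℤ, grBC N (b - a) b) →ₗ[R] grM N a :=
  DirectSum.toModule R ℤ (grM N a) (phiB N a)

lemma phi_lof (b : ℤ) (x : ↥(filKer N b ⊓ filRange N (b - a))) :
    phi N a (DirectSum.lof R ℤ (fun b => grBC N (b - a) b) b (Submodule.Quotient.mk x))
      = Submodule.Quotient.mk (Submodule.inclusion (inf_le_filMonodromy N a b) x) := by
  rw [phi, DirectSum.toModule_lof]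
  rfl

end Main

section Main2
variable {R M : Type*} [CommRing R] [AddCommGroup M] [Module R M] (N : M →ₗ[R] M) (a : ℤ)

lemma phi_surjective : Function.Surjective (phi N a) := by
  intro q
  obtain ⟨z, rfl⟩ := Submodule.Quotient.mk_surjective _ q
  have hz : (z : M) ∈ ⨆ b : ℤ, filKer N b ⊓ filRange N (b - a) := by
    rw [← filMonodromy_eq]; exact z.2
  have key : ∃ hm : (z : M) ∈ filMonodromy N a,
      (Submodule.Quotient.mk ⟨(z : M), hm⟩ : grM N a) ∈ LinearMap.range (phi N a) := by
    refine Submodule.iSup_induction (fun b : ℤ => filKer N b ⊓ filRange N (b - a)) (motive := fun m => ∃ hm : m ∈ filMonodromy N a,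
      (Submodule.Quotient.mk ⟨m, hm⟩ : grM N a) ∈ LinearMap.range (phi N a)) hz ?_ ?_ ?_
    · intro b x hx
      refine ⟨inf_le_filMonodromy N a b hx,
        ⟨DirectSum.lof R ℤ (fun b => grBC N (b - a) b) b (Submodule.Quotient.mk ⟨x, hx⟩), ?_⟩⟩
      rw [phi_lof]
      rfl
    · refine ⟨(filMonodromy N a).zero_mem, ?_⟩
      have h0 : (⟨(0 : M), (filMonodromy N a).zero_mem⟩ : filMonodromy N a) = 0 := rfl
      rw [h0, Submodule.Quotient.mk_zero]
      exact Submodule.zero_mem _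
    · rintro m1 m2 ⟨hm1, r1⟩ ⟨hm2, r2⟩
      refine ⟨Submodule.add_mem _ hm1 hm2, ?_⟩
      have hadd : (⟨m1 + m2, Submodule.add_mem _ hm1 hm2⟩ : filMonodromy N a)
          = ⟨m1, hm1⟩ + ⟨m2, hm2⟩ := rfl
      rw [hadd, Submodule.Quotient.mk_add]
      exact Submodule.add_mem _ r1 r2
  obtain ⟨hm, ξ, hξ⟩ := key
  exact ⟨ξ, hξ⟩

lemma phi_injective : Function.Injective (phi N a) := by
  rw [injective_iff_map_eq_zero]
  intro ξ hξ
  classical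
  have hrep : ∀ b : ℤ, ∃ y : ↥(filKer N b ⊓ filRange N (b - a)),
      (Submodule.Quotient.mk y : grBC N (b - a) b) = ξ b ∧ (ξ b = 0 → y = 0) := by
    intro b
    by_cases h0 : ξ b = 0
    · exact ⟨0, by simp [h0], fun _ => rfl⟩
    · obtain ⟨y, hy⟩ := Submodule.Quotient.mk_surjective _ (ξ b)
      exact ⟨y, hy, fun h => absurd h h0⟩
  choose y hy hy0 using hrep
  set s := DFinsupp.support ξ with hs
  have h1 : phi N a ξ = Submodule.mkQ _
      (∑ b ∈ s, Submodule.inclusion (inf_le_filMonodromy N a b) (y b)) := by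
    rw [map_sum]
    conv_lhs => rw [← DirectSum.sum_support_of ξ, map_sum]
    refine Finset.sum_congr rfl fun b hb => ?_
    rw [← hy b, ← DirectSum.lof_eq_of R, phi_lof]
    rfl
  rw [hξ] at h1
  have h2 : (∑ b ∈ s, ((y b : M))) ∈ filMonodromy N (a - 1) := by
    have := (Submodule.Quotient.mk_eq_zero _).mp h1.symm
    simpa using this
  have h3 := sum_mem_key N a s (fun b => (y b : M)) (fun b => (y b).2) h2
  refine DFinsupp.ext fun b => ?_
  rw [DFinsupp.zero_apply]
  by_cases hb : b ∈ s
  · rw [← hy b]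
    rw [Submodule.Quotient.mk_eq_zero]
    exact Submodule.mem_comap.mpr (filMonodromy_le_sup N a b (h3 b hb))
  · exact DFinsupp.notMem_support_iff.mp hb

end Main2

/-- For every integer `a`, the inclusions `fil_b M ∩ fil^c M ⊆ fil^M_a M` over pairs `(b,c)`
with `b − c = a` induce a well-defined isomorphism `⊕_{b−c=a} gr^c_b M ≅ gr^M_a M`. -/
theorem statement5 {R M : Type*} [CommRing R] [AddCommGroup M] [Module R M]
    (N : M →ₗ[R] M) (hN : IsNilpotent N) (a : ℤ) :
    ∃ h : ∀ b : ℤ, filKer N b ⊓ filRange N (b - a) ≤ filMonodromy N a,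
    ∃ e : (⨁ b : ℤ, grBC N (b - a) b) ≃ₗ[R] grM N a,
      ∀ (b : ℤ) (x : ↥(filKer N b ⊓ filRange N (b - a))),
        e (DirectSum.lof R ℤ (fun b => grBC N (b - a) b) b (Submodule.Quotient.mk x))
          = Submodule.Quotient.mk (Submodule.inclusion (h b) x) := by
  refine ⟨inf_le_filMonodromy N a,
    LinearEquiv.ofBijective (phi N a) ⟨phi_injective N a, phi_surjective N a⟩,
    fun b x => ?_⟩
  exact phi_lof N a b x
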